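/- Consistency-bound sandwich: for every possibility function g ∈ F(Θ), CBO_low(g) ≤ log Z_max ≤ CBO_up(g). -/
import Mathlib

open scoped ENNReal

/-- A possibility function on `Θ`: valued in `[0,1]` with supremum `1`. -/
def IsPossibility {Θ : Type*} (f : Θ → ℝ) : Prop :=
  (∀ θ, 0 ≤ f θ) ∧ (∀ θ, f θ ≤ 1) ∧ (⨆ θ, f θ) = 1

/-- Extended logarithm of the quotient `g θ / π θ`, computed in `[0,∞]` with the
conventions `0/0 = 0` and `a/0 = ∞` for `a > 0`, and `log 0 = -∞`, `log ∞ = ∞`. -/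
noncomputable def ratioLog {Θ : Type*} (g π : Θ → ℝ) (θ : Θ) : EReal :=
  ENNReal.log (ENNReal.ofReal (g θ) / ENNReal.ofReal (π θ))

/-- The lower consistency bound `CBO_low(g) = inf_θ { -ℓ(θ) - log(g(θ)/π(θ)) }`. -/
noncomputable def CBOlow {Θ : Type*} (ℓ π g : Θ → ℝ) : EReal :=
  ⨅ θ, ((-ℓ θ : ℝ) : EReal) - ratioLog g π θ

/-- The upper consistency bound `CBO_up(g) = sup_θ { -ℓ(θ) - log(g(θ)/π(θ)) }`. -/
noncomputable def CBOup {Θ : Type*} (ℓ π g : Θ → ℝ) : EReal :=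
  ⨆ θ, ((-ℓ θ : ℝ) : EReal) - ratioLog g π θ

/-- The maxitive marginal likelihood `Z_max = sup_θ exp(-ℓ(θ)) π(θ)`. -/
noncomputable def Zmax {Θ : Type*} (ℓ π : Θ → ℝ) : ℝ :=
  ⨆ θ, Real.exp (-ℓ θ) * π θ

/-- The maxitive posterior `g*_max(θ) = exp(-ℓ(θ)) π(θ) / Z_max`. -/
noncomputable def gstar {Θ : Type*} (ℓ π : Θ → ℝ) (θ : Θ) : ℝ :=
  Real.exp (-ℓ θ) * π θ / Zmax ℓ π

/-- The max-relative entropy `D_max(g ‖ f) = sup_θ log(g(θ)/f(θ))`. -/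
noncomputable def Dmax {Θ : Type*} (g f : Θ → ℝ) : EReal :=
  ⨆ θ, ratioLog g f θ

private lemma le_of_forall_add_eps {x : EReal} {y : ℝ}
    (h : ∀ ε : ℝ, 0 < ε → x ≤ ((y + ε : ℝ) : EReal)) : x ≤ (y : EReal) := by
  by_contra hc
  push_neg at hc
  obtain ⟨a, hya, hax⟩ := EReal.lt_iff_exists_real_btwn.mp hc
  have hya' : y < a := by exact_mod_cast hya
  have h1 : x ≤ ((y + (a - y) : ℝ) : EReal) := h _ (sub_pos.mpr hya')
  rw [show y + (a - y) = a by ring] at h1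
  exact absurd h1 (not_le.mpr hax)

private lemma le_of_forall_sub_eps {x : EReal} {y : ℝ}
    (h : ∀ ε : ℝ, 0 < ε → ((y - ε : ℝ) : EReal) ≤ x) : (y : EReal) ≤ x := by
  by_contra hc
  push_neg at hc
  obtain ⟨a, hxa, hay⟩ := EReal.lt_iff_exists_real_btwn.mp hc
  have hay' : a < y := by exact_mod_cast hay
  have h1 : ((y - (y - a) : ℝ) : EReal) ≤ x := h _ (sub_pos.mpr hay')
  rw [show y - (y - a) = a by ring] at h1
  exact absurd h1 (not_le.mpr hxa)

/-- Consistency-bound sandwich: `CBO_low(g) ≤ log Z_max ≤ CBO_up(g)` for every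
possibility function `g`. -/
theorem CBO_sandwich {Θ : Type*} [Nonempty Θ] (π ℓ g : Θ → ℝ)
    (hπ : IsPossibility π) (hℓ : ∀ θ, 0 ≤ ℓ θ) (hg : IsPossibility g) :
    CBOlow ℓ π g ≤ ((Real.log (Zmax ℓ π) : ℝ) : EReal) ∧
      ((Real.log (Zmax ℓ π) : ℝ) : EReal) ≤ CBOup ℓ π g := by
  obtain ⟨hπ0, hπ1, hπs⟩ := hπ
  obtain ⟨hg0, hg1, hgs⟩ := hg
  set Z := Zmax ℓ π with hZ
  have hbdd : BddAbove (Set.range fun θ => Real.exp (-ℓ θ) * π θ) := by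
    refine ⟨1, ?_⟩
    rintro x ⟨θ, rfl⟩
    calc Real.exp (-ℓ θ) * π θ ≤ 1 * 1 := by
          apply mul_le_mul _ (hπ1 θ) (hπ0 θ) zero_le_one
          exact Real.exp_le_one_iff.mpr (neg_nonpos.mpr (hℓ θ))
      _ = 1 := one_mul 1
  have hZle : ∀ θ, Real.exp (-ℓ θ) * π θ ≤ Z := fun θ => le_ciSup hbdd θ
  have hZpos : 0 < Z := by
    obtain ⟨θ₀, hθ₀⟩ : ∃ θ, (1/2 : ℝ) < π θ := by
      have : (1/2 : ℝ) < ⨆ θ, π θ := by rw [hπs]; norm_num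
      exact exists_lt_of_lt_ciSup this
    calc (0:ℝ) < Real.exp (-ℓ θ₀) * π θ₀ :=
          mul_pos (Real.exp_pos _) (lt_trans (by norm_num) hθ₀)
      _ ≤ Z := hZle θ₀
  constructor
  · -- lower bound
    apply le_of_forall_add_eps
    intro ε hε
    obtain ⟨θ, hθ⟩ : ∃ θ, Real.exp (-ε) < g θ := by
      have : Real.exp (-ε) < ⨆ θ, g θ := by
        rw [hgs]; exact Real.exp_lt_one_iff.mpr (neg_neg_iff_pos.mpr hε)
      exact exists_lt_of_lt_ciSup this
    have hgθ : 0 < g θ := lt_trans (Real.exp_pos _) hθ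
    refine le_trans (iInf_le _ θ) ?_
    rcases eq_or_lt_of_le (hπ0 θ) with hπθ | hπθ
    · -- π θ = 0, g θ > 0 : ratio = ∞, term = ⊥
      have : ratioLog g π θ = ⊤ := by
        rw [ratioLog, ← hπθ, ENNReal.ofReal_zero, ENNReal.div_zero, ENNReal.log_top]
        simp [ENNReal.ofReal_eq_zero, not_le, hgθ]
      rw [this, EReal.sub_top]
      exact bot_le
    · -- π θ > 0
      have hrl : ratioLog g π θ = ((Real.log (g θ / π θ) : ℝ) : EReal) := by
        rw [ratioLog, ← ENNReal.ofReal_div_of_pos hπθ,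
          ENNReal.log_ofReal_of_pos (div_pos hgθ hπθ)]
      rw [hrl, ← EReal.coe_sub, EReal.coe_le_coe_iff]
      have h1 : Real.log (Real.exp (-ℓ θ) * π θ) ≤ Real.log Z :=
        Real.log_le_log (mul_pos (Real.exp_pos _) hπθ) (hZle θ)
      rw [Real.log_mul (Real.exp_ne_zero _) (ne_of_gt hπθ), Real.log_exp] at h1
      have h2 : -ε < Real.log (g θ) := by
        have := Real.log_lt_log (Real.exp_pos _) hθ
        rwa [Real.log_exp] at this
      rw [Real.log_div (ne_of_gt hgθ) (ne_of_gt hπθ)]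
      linarith
  · -- upper bound
    apply le_of_forall_sub_eps
    intro ε hε
    obtain ⟨θ, hθ⟩ : ∃ θ, Z * Real.exp (-ε) < Real.exp (-ℓ θ) * π θ := by
      have : Z * Real.exp (-ε) < ⨆ θ, Real.exp (-ℓ θ) * π θ := by
        rw [show (⨆ θ, Real.exp (-ℓ θ) * π θ) = Z from rfl]
        nth_rewrite 2 [← mul_one Z]
        exact mul_lt_mul_of_pos_left (Real.exp_lt_one_iff.mpr (neg_neg_iff_pos.mpr hε)) hZpos
      exact exists_lt_of_lt_ciSup this
    have hπθ : 0 < π θ := by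
      by_contra hcon
      push_neg at hcon
      have : Z * Real.exp (-ε) < 0 := by
        calc Z * Real.exp (-ε) < Real.exp (-ℓ θ) * π θ := hθ
          _ ≤ 0 := mul_nonpos_of_nonneg_of_nonpos (Real.exp_pos _).le hcon
      exact absurd this (not_lt.mpr (mul_nonneg hZpos.le (Real.exp_pos _).le))
    refine le_trans ?_ (le_iSup _ θ)
    rcases eq_or_lt_of_le (hg0 θ) with hgθ | hgθ
    · -- g θ = 0 : ratio = 0, log = ⊥, term = ⊤
      have : ratioLog g π θ = ⊥ := by
        rw [ratioLog, ← hgθ, ENNReal.ofReal_zero, ENNReal.zero_div, ENNReal.log_zero]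
      rw [this, EReal.coe_sub_bot]
      exact le_top
    · have hrl : ratioLog g π θ = ((Real.log (g θ / π θ) : ℝ) : EReal) := by
        rw [ratioLog, ← ENNReal.ofReal_div_of_pos hπθ,
          ENNReal.log_ofReal_of_pos (div_pos hgθ hπθ)]
      rw [hrl, ← EReal.coe_sub, EReal.coe_le_coe_iff]
      have h1 : Real.log (Z * Real.exp (-ε)) ≤ Real.log (Real.exp (-ℓ θ) * π θ) :=
        Real.log_le_log (mul_pos hZpos (Real.exp_pos _)) hθ.le
      rw [Real.log_mul (ne_of_gt hZpos) (Real.exp_ne_zero _), Real.log_exp,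
        Real.log_mul (Real.exp_ne_zero _) (ne_of_gt hπθ), Real.log_exp] at h1
      have h2 : Real.log (g θ) ≤ 0 :=
        Real.log_nonpos (hg0 θ) (hg1 θ)
      rw [Real.log_div (ne_of_gt hgθ) (ne_of_gt hπθ)]
      linarith
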